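/- The number of extroverted triangulations of a convex n-gon (for n ≥ 5) is n·2^(n-5). -/

import Mathlib

namespace ET

def Cross (p q : ℕ × ℕ) : Prop :=
  (p.1 < q.1 ∧ q.1 < p.2 ∧ p.2 < q.2) ∨ (q.1 < p.1 ∧ p.1 < q.2 ∧ q.2 < p.2)

instance (p q : ℕ × ℕ) : Decidable (Cross p q) := by unfold Cross; infer_instance

def IsChord (L R : ℕ) (p : ℕ × ℕ) : Prop :=
  L ≤ p.1 ∧ p.1 + 2 ≤ p.2 ∧ p.2 ≤ R ∧ ¬(p.1 = L ∧ p.2 = R)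

instance (L R : ℕ) (p : ℕ × ℕ) : Decidable (IsChord L R p) := by unfold IsChord; infer_instance

def Good (L R : ℕ) (F : Finset (ℕ × ℕ)) : Prop :=
  (∀ p ∈ F, IsChord L R p) ∧ (∀ p ∈ F, ∀ q ∈ F, ¬ Cross p q) ∧
  (∀ p ∈ F, ∀ q ∈ F, ¬ (p.2 = q.1 ∧ (p.1, q.2) ∈ F)) ∧ F.card = R - L - 2

instance (L R : ℕ) (F : Finset (ℕ × ℕ)) : Decidable (Good L R F) := by
  unfold Good; infer_instance

def NoSplit (L R : ℕ) (F : Finset (ℕ × ℕ)) : Prop :=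
  ∀ p ∈ F, ∀ q ∈ F, ¬ (p.1 = L ∧ q.2 = R ∧ p.2 = q.1)

instance (L R : ℕ) (F : Finset (ℕ × ℕ)) : Decidable (NoSplit L R F) := by
  unfold NoSplit; infer_instance

def allChords (L R : ℕ) : Finset (ℕ × ℕ) :=
  (Finset.range (R+1) ×ˢ Finset.range (R+1)).filter (IsChord L R)

def HF (L R : ℕ) : Finset (Finset (ℕ × ℕ)) :=
  (allChords L R).powerset.filter fun F => Good L R F ∧ NoSplit L R F

def EF (L R : ℕ) : Finset (Finset (ℕ × ℕ)) :=
  (allChords L R).powerset.filter fun F => Good L R F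

lemma subset_allChords {L R : ℕ} {F : Finset (ℕ × ℕ)} (h : ∀ p ∈ F, IsChord L R p) :
    F ⊆ allChords L R := by
  intro p hp
  have hc := h p hp
  obtain ⟨h1, h2, h3, h4⟩ := hc
  simp only [allChords, Finset.mem_filter, Finset.mem_product, Finset.mem_range]
  exact ⟨⟨by omega, by omega⟩, h1, h2, h3, h4⟩

lemma mem_HF_iff {L R : ℕ} {F : Finset (ℕ × ℕ)} :
    F ∈ HF L R ↔ Good L R F ∧ NoSplit L R F := by
  constructor
  · intro h; exact (Finset.mem_filter.1 h).2
  · intro h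
    exact Finset.mem_filter.2 ⟨Finset.mem_powerset.2 (subset_allChords h.1.1), h⟩

lemma mem_EF_iff {L R : ℕ} {F : Finset (ℕ × ℕ)} :
    F ∈ EF L R ↔ Good L R F := by
  constructor
  · intro h; exact (Finset.mem_filter.1 h).2
  · intro h
    exact Finset.mem_filter.2 ⟨Finset.mem_powerset.2 (subset_allChords h.1), h⟩


lemma maxcard_aux : ∀ (k L R : ℕ) (F : Finset (ℕ × ℕ)), R - L ≤ k →
    (∀ p ∈ F, IsChord L R p) → (∀ p ∈ F, ∀ q ∈ F, ¬ Cross p q) →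
    F.card ≤ R - L - 2 := by
  intro k
  induction k with
  | zero =>
    intro L R F hk hc _
    have : F = ∅ := by
      apply Finset.eq_empty_of_forall_notMem
      intro p hp
      have := hc p hp
      unfold IsChord at this
      omega
    simp [this]
  | succ k ih =>
    intro L R F hk hc hnc
    by_cases hsmall : R ≤ L + 2
    · have : F = ∅ := by
        apply Finset.eq_empty_of_forall_notMem
        intro p hp
        have := hc p hp
        unfold IsChord at this
        omega
      simp [this]
    push_neg at hsmall
    by_cases hk' : R - L ≤ k
    · exact ih L R F hk' hc hnc
    -- R - L = k + 1, R ≥ L + 3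
    by_cases hend : ∃ p ∈ F, p.2 = R
    · obtain ⟨p₀, hp₀, hp₀2⟩ := hend
      -- minimal left endpoint among chords ending at R
      obtain ⟨m, hmmem, hmmin⟩ := Finset.exists_min_image (F.filter (fun p => p.2 = R)) Prod.fst
        ⟨p₀, Finset.mem_filter.2 ⟨hp₀, hp₀2⟩⟩
      have hmF : m ∈ F := (Finset.mem_filter.1 hmmem).1
      have hm2 : m.2 = R := (Finset.mem_filter.1 hmmem).2
      have hmchord := hc m hmF
      unfold IsChord at hmchord
      have haL : L + 1 ≤ m.1 := by omega
      have haR : m.1 + 2 ≤ R := by omega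
      -- dichotomy
      have hdich : ∀ p ∈ F, p.2 ≤ m.1 ∨ m.1 ≤ p.1 := by
        intro p hp
        by_contra hcon
        push_neg at hcon
        obtain ⟨h1, h2⟩ := hcon
        have hpc := hc p hp
        unfold IsChord at hpc
        by_cases hpR : p.2 = R
        · have : m.1 ≤ p.1 := hmmin p (Finset.mem_filter.2 ⟨hp, hpR⟩)
          omega
        · exact hnc p hp m hmF (Or.inl (by omega))
      set F₁ := F.filter (fun p => p.2 ≤ m.1) with hF₁
      set F₂ := F.filter (fun p => ¬ p.2 ≤ m.1) with hF₂
      have hunion : F ⊆ F₁ ∪ F₂ := by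
        intro p hp
        rw [Finset.mem_union, hF₁, hF₂]
        by_cases h : p.2 ≤ m.1
        · exact Or.inl (Finset.mem_filter.2 ⟨hp, h⟩)
        · exact Or.inr (Finset.mem_filter.2 ⟨hp, h⟩)
      have hcard : F.card ≤ F₁.card + F₂.card :=
        le_trans (Finset.card_le_card hunion) (Finset.card_union_le _ _)
      have hc₁ : ∀ p ∈ F₁.erase (L, m.1), IsChord L m.1 p := by
        intro p hp
        have hpe := Finset.mem_erase.1 hp
        have hpF₁ := Finset.mem_filter.1 hpe.2
        have := hc p hpF₁.1
        unfold IsChord at this ⊢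
        refine ⟨this.1, this.2.1, hpF₁.2, ?_⟩
        intro hfull
        exact hpe.1 (Prod.ext hfull.1 hfull.2)
      have hc₂ : ∀ p ∈ F₂.erase (m.1, R), IsChord m.1 R p := by
        intro p hp
        have hpe := Finset.mem_erase.1 hp
        have hpF₂ := Finset.mem_filter.1 hpe.2
        have h1 := hc p hpF₂.1
        have h2 := hdich p hpF₂.1
        have h3 := hpF₂.2
        unfold IsChord at h1 ⊢
        refine ⟨by omega, h1.2.1, h1.2.2.1, ?_⟩
        intro hfull
        exact hpe.1 (Prod.ext hfull.1 hfull.2)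
      have hnc₁ : ∀ p ∈ F₁.erase (L, m.1), ∀ q ∈ F₁.erase (L, m.1), ¬ Cross p q := by
        intro p hp q hq
        exact hnc p (Finset.mem_filter.1 (Finset.mem_erase.1 hp).2).1
          q (Finset.mem_filter.1 (Finset.mem_erase.1 hq).2).1
      have hnc₂ : ∀ p ∈ F₂.erase (m.1, R), ∀ q ∈ F₂.erase (m.1, R), ¬ Cross p q := by
        intro p hp q hq
        exact hnc p (Finset.mem_filter.1 (Finset.mem_erase.1 hp).2).1
          q (Finset.mem_filter.1 (Finset.mem_erase.1 hq).2).1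
      have hb₁ : (F₁.erase (L, m.1)).card ≤ m.1 - L - 2 := ih L m.1 _ (by omega) hc₁ hnc₁
      have hb₂ : (F₂.erase (m.1, R)).card ≤ R - m.1 - 2 := ih m.1 R _ (by omega) hc₂ hnc₂
      have he₁ : F₁.card ≤ m.1 - L - 1 := by
        by_cases h : (L, m.1) ∈ F₁
        · have hch := hc (L, m.1) (Finset.mem_filter.1 h).1
          unfold IsChord at hch
          dsimp only at hch
          rw [Finset.card_erase_of_mem h] at hb₁
          omega
        · rw [Finset.erase_eq_of_notMem h] at hb₁; omega
      have he₂ : F₂.card ≤ R - m.1 - 1 := by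
        by_cases h : (m.1, R) ∈ F₂
        · rw [Finset.card_erase_of_mem h] at hb₂; omega
        · rw [Finset.erase_eq_of_notMem h] at hb₂; omega
      omega
    · push_neg at hend
      have hcF : ∀ p ∈ F.erase (L, R-1), IsChord L (R-1) p := by
        intro p hp
        have hpe := Finset.mem_erase.1 hp
        have h1 := hc p hpe.2
        have h2 := hend p hpe.2
        unfold IsChord at h1 ⊢
        refine ⟨h1.1, h1.2.1, by omega, ?_⟩
        intro hfull
        exact hpe.1 (Prod.ext hfull.1 hfull.2)
      have hncF : ∀ p ∈ F.erase (L, R-1), ∀ q ∈ F.erase (L, R-1), ¬ Cross p q := by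
        intro p hp q hq
        exact hnc p (Finset.mem_erase.1 hp).2 q (Finset.mem_erase.1 hq).2
      have hb := ih L (R-1) _ (by omega) hcF hncF
      have : F.card ≤ (F.erase (L, R-1)).card + 1 := by
        by_cases h : (L, R-1) ∈ F
        · rw [Finset.card_erase_of_mem h]; omega
        · rw [Finset.erase_eq_of_notMem h]; omega
      omega

lemma maxcard {L R : ℕ} {F : Finset (ℕ × ℕ)}
    (hc : ∀ p ∈ F, IsChord L R p) (hnc : ∀ p ∈ F, ∀ q ∈ F, ¬ Cross p q) :
    F.card ≤ R - L - 2 :=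
  maxcard_aux (R - L) L R F le_rfl hc hnc

lemma exists_top {L R : ℕ} {F : Finset (ℕ × ℕ)} (hLR : L + 2 ≤ R)
    (hc : ∀ p ∈ F, IsChord L R p) (hnc : ∀ p ∈ F, ∀ q ∈ F, ¬ Cross p q)
    (hcard : F.card = R - L - 2) :
    ∃ j, L < j ∧ j < R ∧ (j = L + 1 ∨ (L, j) ∈ F) ∧ (R = j + 1 ∨ (j, R) ∈ F) := by
  classical
  set S := (Finset.Ioo L R).filter (fun j => R = j + 1 ∨ (j, R) ∈ F) with hS
  have hne : (R - 1) ∈ S := by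
    rw [hS]
    refine Finset.mem_filter.2 ⟨Finset.mem_Ioo.2 ⟨by omega, by omega⟩, Or.inl (by omega)⟩
  set j := S.min' ⟨R - 1, hne⟩ with hj
  have hjS : j ∈ S := Finset.min'_mem _ _
  have hjIoo := Finset.mem_Ioo.1 (Finset.mem_filter.1 hjS).1
  have hjedge := (Finset.mem_filter.1 hjS).2
  by_cases hj1 : j = L + 1
  · exact ⟨j, hjIoo.1, hjIoo.2, Or.inl hj1, hjedge⟩
  have hjL2 : L + 2 ≤ j := by omega
  -- key: no chord q of F has L < q.1 < j < q.2
  have key : ∀ q ∈ F, ¬ (L < q.1 ∧ q.1 < j ∧ j < q.2) := by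
    intro q hq hcon
    have hqc := hc q hq
    unfold IsChord at hqc
    by_cases hq2 : q.2 = R
    · have : q.1 ∈ S := by
        rw [hS]
        refine Finset.mem_filter.2 ⟨Finset.mem_Ioo.2 ⟨by omega, by omega⟩, Or.inr ?_⟩
        have : q = (q.1, R) := Prod.ext rfl hq2
        rwa [← this]
      have := Finset.min'_le _ _ this
      omega
    · rcases hjedge with h | h
      · omega
      · exact hnc q hq (j, R) h (Or.inl (by dsimp only; omega))
  by_cases hmem : (L, j) ∈ F
  · exact ⟨j, hjIoo.1, hjIoo.2, Or.inr hmem, hjedge⟩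
  exfalso
  have hc' : ∀ p ∈ insert (L, j) F, IsChord L R p := by
    intro p hp
    rcases Finset.mem_insert.1 hp with rfl | hp
    · unfold IsChord; dsimp only; omega
    · exact hc p hp
  have hnc' : ∀ p ∈ insert (L, j) F, ∀ q ∈ insert (L, j) F, ¬ Cross p q := by
    intro p hp q hq
    rcases Finset.mem_insert.1 hp with rfl | hp <;> rcases Finset.mem_insert.1 hq with rfl | hq
    · intro hcr; unfold Cross at hcr; dsimp only at hcr; omega
    · intro hcr
      unfold Cross at hcr; dsimp only at hcr
      have hqc := hc q hq; unfold IsChord at hqc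
      exact key q hq (by omega)
    · intro hcr
      unfold Cross at hcr; dsimp only at hcr
      have hpc := hc p hp; unfold IsChord at hpc
      exact key p hp (by omega)
    · exact hnc p hp q hq
  have := maxcard hc' hnc'
  rw [Finset.card_insert_of_notMem hmem] at this
  omega

lemma top_unique_aux {L R : ℕ} {F : Finset (ℕ × ℕ)}
    (hc : ∀ p ∈ F, IsChord L R p) (hnc : ∀ p ∈ F, ∀ q ∈ F, ¬ Cross p q)
    {j j' : ℕ} (hj : L < j ∧ j < R ∧ (j = L + 1 ∨ (L, j) ∈ F) ∧ (R = j + 1 ∨ (j, R) ∈ F))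
    (hj' : L < j' ∧ j' < R ∧ (j' = L + 1 ∨ (L, j') ∈ F) ∧ (R = j' + 1 ∨ (j', R) ∈ F))
    (hlt : j < j') : False := by
  obtain ⟨h1, h2, h3, h4⟩ := hj
  obtain ⟨h1', h2', h3', h4'⟩ := hj'
  have hjR : (j, R) ∈ F := h4.resolve_left (by omega)
  have hLj' : (L, j') ∈ F := h3'.resolve_left (by omega)
  exact hnc (L, j') hLj' (j, R) hjR (Or.inl (by dsimp only; omega))

lemma top_unique {L R : ℕ} {F : Finset (ℕ × ℕ)}
    (hc : ∀ p ∈ F, IsChord L R p) (hnc : ∀ p ∈ F, ∀ q ∈ F, ¬ Cross p q)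
    {j j' : ℕ} (hj : L < j ∧ j < R ∧ (j = L + 1 ∨ (L, j) ∈ F) ∧ (R = j + 1 ∨ (j, R) ∈ F))
    (hj' : L < j' ∧ j' < R ∧ (j' = L + 1 ∨ (L, j') ∈ F) ∧ (R = j' + 1 ∨ (j', R) ∈ F)) :
    j = j' := by
  rcases lt_trichotomy j j' with h | h | h
  · exact absurd (top_unique_aux hc hnc hj hj' h) (fun x => x)
  · exact h
  · exact absurd (top_unique_aux hc hnc hj' hj h) (fun x => x)


lemma allChords_small {L R : ℕ} (h : R ≤ L + 2) : allChords L R = ∅ := by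
  apply Finset.eq_empty_of_forall_notMem
  intro p hp
  have := (Finset.mem_filter.1 hp).2
  unfold IsChord at this
  omega

lemma HF_base (L : ℕ) : HF L (L + 2) = {∅} := by
  ext F
  simp only [HF, Finset.mem_filter, Finset.mem_powerset, Finset.mem_singleton]
  constructor
  · rintro ⟨hsub, -⟩
    rw [allChords_small (le_refl (L+2))] at hsub
    exact Finset.subset_empty.1 hsub
  · rintro rfl
    refine ⟨by simp, ⟨?_, ?_, ?_, ?_⟩, ?_⟩ <;> simp [Good, NoSplit]

lemma good_of_HF {L R : ℕ} {F : Finset (ℕ × ℕ)} (h : F ∈ HF L R) :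
    Good L R F ∧ NoSplit L R F := mem_HF_iff.1 h

-- the two insertion maps
lemma insert_left_mem_HF {L R : ℕ} (h : L + 3 ≤ R) {F : Finset (ℕ × ℕ)}
    (hF : F ∈ HF (L+1) R) : insert (L+1, R) F ∈ HF L R ∧ (L+1, R) ∉ F := by
  obtain ⟨⟨hch, hnc, htri, hcard⟩, hns⟩ := mem_HF_iff.1 hF
  have hnotmem : (L+1, R) ∉ F := by
    intro hmem
    have := hch _ hmem
    unfold IsChord at this
    dsimp only at this
    omega
  have hbnd : ∀ p ∈ F, L + 1 ≤ p.1 ∧ p.1 + 2 ≤ p.2 ∧ p.2 ≤ R := by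
    intro p hp; have := hch p hp; unfold IsChord at this; exact ⟨this.1, this.2.1, this.2.2.1⟩
  refine ⟨mem_HF_iff.2 ⟨⟨?_, ?_, ?_, ?_⟩, ?_⟩, hnotmem⟩
  · intro p hp
    rcases Finset.mem_insert.1 hp with rfl | hp
    · unfold IsChord; dsimp only; omega
    · have := hch p hp; unfold IsChord at this ⊢; omega
  · intro p hp q hq
    rcases Finset.mem_insert.1 hp with rfl | hp <;> rcases Finset.mem_insert.1 hq with rfl | hq
    · intro hcr; unfold Cross at hcr; dsimp only at hcr; omega
    · have := hbnd q hq; intro hcr; unfold Cross at hcr; dsimp only at hcr; omega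
    · have := hbnd p hp; intro hcr; unfold Cross at hcr; dsimp only at hcr; omega
    · exact hnc p hp q hq
  · -- no triangle
    intro p hp q hq ⟨hpq, hr⟩
    rcases Finset.mem_insert.1 hp with rfl | hp <;> rcases Finset.mem_insert.1 hq with rfl | hq
    · dsimp only at hpq; omega
    · have := hbnd q hq; dsimp only at hpq; omega
    · have := hbnd p hp; dsimp only at hpq; omega
    · rcases Finset.mem_insert.1 hr with he | hr
      · have h1 := hbnd p hp; have h2 := hbnd q hq
        rw [Prod.ext_iff] at he; dsimp only at he
        exact hns p hp q hq ⟨by omega, by omega, hpq⟩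
      · exact htri p hp q hq ⟨hpq, hr⟩
  · rw [Finset.card_insert_of_notMem hnotmem]; omega
  · intro p hp q hq ⟨hp1, _, _⟩
    rcases Finset.mem_insert.1 hp with rfl | hp
    · dsimp only at hp1; omega
    · have := hbnd p hp; omega

lemma insert_right_mem_HF {L R : ℕ} (h : L + 3 ≤ R) {F : Finset (ℕ × ℕ)}
    (hF : F ∈ HF L (R-1)) : insert (L, R-1) F ∈ HF L R ∧ (L, R-1) ∉ F := by
  obtain ⟨⟨hch, hnc, htri, hcard⟩, hns⟩ := mem_HF_iff.1 hF
  have hnotmem : (L, R-1) ∉ F := by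
    intro hmem
    have := hch _ hmem
    unfold IsChord at this
    dsimp only at this
    omega
  have hbnd : ∀ p ∈ F, L ≤ p.1 ∧ p.1 + 2 ≤ p.2 ∧ p.2 ≤ R - 1 := by
    intro p hp; have := hch p hp; unfold IsChord at this; exact ⟨this.1, this.2.1, this.2.2.1⟩
  refine ⟨mem_HF_iff.2 ⟨⟨?_, ?_, ?_, ?_⟩, ?_⟩, hnotmem⟩
  · intro p hp
    rcases Finset.mem_insert.1 hp with rfl | hp
    · unfold IsChord; dsimp only; omega
    · have := hch p hp; unfold IsChord at this ⊢; omega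
  · intro p hp q hq
    rcases Finset.mem_insert.1 hp with rfl | hp <;> rcases Finset.mem_insert.1 hq with rfl | hq
    · intro hcr; unfold Cross at hcr; dsimp only at hcr; omega
    · have := hbnd q hq; intro hcr; unfold Cross at hcr; dsimp only at hcr; omega
    · have := hbnd p hp; intro hcr; unfold Cross at hcr; dsimp only at hcr; omega
    · exact hnc p hp q hq
  · intro p hp q hq ⟨hpq, hr⟩
    rcases Finset.mem_insert.1 hp with rfl | hp <;> rcases Finset.mem_insert.1 hq with rfl | hq
    · dsimp only at hpq; omega
    · have := hbnd q hq; dsimp only at hpq; omega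
    · have := hbnd p hp; dsimp only at hpq; omega
    · rcases Finset.mem_insert.1 hr with he | hr
      · have h1 := hbnd p hp; have h2 := hbnd q hq
        rw [Prod.ext_iff] at he; dsimp only at he
        exact hns p hp q hq ⟨by omega, by omega, hpq⟩
      · exact htri p hp q hq ⟨hpq, hr⟩
  · rw [Finset.card_insert_of_notMem hnotmem]; omega
  · intro p hp q hq ⟨_, hq2, _⟩
    rcases Finset.mem_insert.1 hq with rfl | hq
    · dsimp only at hq2; omega
    · have := hbnd q hq; omega

lemma HF_mem_cases {L R : ℕ} (h : L + 3 ≤ R) {F : Finset (ℕ × ℕ)} (hF : F ∈ HF L R) :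
    ((L+1, R) ∈ F ∧ F.erase (L+1, R) ∈ HF (L+1) R) ∨
    ((L, R-1) ∈ F ∧ F.erase (L, R-1) ∈ HF L (R-1)) := by
  obtain ⟨⟨hch, hnc, htri, hcard⟩, hns⟩ := mem_HF_iff.1 hF
  have hbnd : ∀ p ∈ F, L ≤ p.1 ∧ p.1 + 2 ≤ p.2 ∧ p.2 ≤ R ∧ ¬(p.1 = L ∧ p.2 = R) := by
    intro p hp; exact hch p hp
  obtain ⟨j, hj1, hj2, hj3, hj4⟩ := exists_top (by omega) hch hnc hcard
  have hnotboth : ¬((L, j) ∈ F ∧ (j, R) ∈ F) := by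
    intro ⟨h1, h2⟩
    exact hns (L, j) h1 (j, R) h2 ⟨rfl, rfl, rfl⟩
  have hcases : j = L + 1 ∨ j = R - 1 := by
    rcases hj3 with h3 | h3
    · exact Or.inl h3
    rcases hj4 with h4 | h4
    · right; omega
    · exact absurd ⟨h3, h4⟩ hnotboth
  rcases hcases with rfl | rfl
  · -- j = L+1, so (L+1, R) ∈ F
    have hmem : (L+1, R) ∈ F := by
      rcases hj4 with h4 | h4
      · omega
      · exact h4
    left
    refine ⟨hmem, mem_HF_iff.2 ⟨⟨?_, ?_, ?_, ?_⟩, ?_⟩⟩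
    · intro p hp
      obtain ⟨hpne, hpF⟩ := Finset.mem_erase.1 hp
      have hb := hbnd p hpF
      have hL1 : L + 1 ≤ p.1 := by
        by_contra hcon
        have hp1 : p.1 = L := by omega
        -- p = (L, p.2); p noncrossing with (L+1, R) forces p.2 = R, contradiction
        have hcr := hnc p hpF (L+1, R) hmem
        unfold Cross at hcr
        dsimp only at hcr
        push_neg at hcr
        omega
      unfold IsChord
      refine ⟨hL1, hb.2.1, hb.2.2.1, ?_⟩
      intro ⟨he1, he2⟩
      exact hpne (Prod.ext he1 he2)
    · intro p hp q hq
      exact hnc p (Finset.mem_erase.1 hp).2 q (Finset.mem_erase.1 hq).2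
    · intro p hp q hq ⟨hpq, hr⟩
      exact htri p (Finset.mem_erase.1 hp).2 q (Finset.mem_erase.1 hq).2
        ⟨hpq, (Finset.erase_subset _ _) hr⟩
    · rw [Finset.card_erase_of_mem hmem]; omega
    · intro p hp q hq ⟨hp1, hq2, hpq⟩
      exact htri p (Finset.mem_erase.1 hp).2 q (Finset.mem_erase.1 hq).2
        ⟨hpq, by rw [hp1, hq2]; exact hmem⟩
  · -- j = R-1, so (L, R-1) ∈ F
    have hmem : (L, R-1) ∈ F := by
      rcases hj3 with h3 | h3
      · omega
      · exact h3
    right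
    refine ⟨hmem, mem_HF_iff.2 ⟨⟨?_, ?_, ?_, ?_⟩, ?_⟩⟩
    · intro p hp
      obtain ⟨hpne, hpF⟩ := Finset.mem_erase.1 hp
      have hb := hbnd p hpF
      have hR1 : p.2 ≤ R - 1 := by
        by_contra hcon
        have hp2 : p.2 = R := by omega
        have hcr := hnc (L, R-1) hmem p hpF
        unfold Cross at hcr
        dsimp only at hcr
        push_neg at hcr
        omega
      unfold IsChord
      refine ⟨hb.1, hb.2.1, hR1, ?_⟩
      intro ⟨he1, he2⟩
      exact hpne (Prod.ext he1 he2)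
    · intro p hp q hq
      exact hnc p (Finset.mem_erase.1 hp).2 q (Finset.mem_erase.1 hq).2
    · intro p hp q hq ⟨hpq, hr⟩
      exact htri p (Finset.mem_erase.1 hp).2 q (Finset.mem_erase.1 hq).2
        ⟨hpq, (Finset.erase_subset _ _) hr⟩
    · rw [Finset.card_erase_of_mem hmem]; omega
    · intro p hp q hq ⟨hp1, hq2, hpq⟩
      exact htri p (Finset.mem_erase.1 hp).2 q (Finset.mem_erase.1 hq).2
        ⟨hpq, by rw [hp1, hq2]; exact hmem⟩

lemma HF_step {L R : ℕ} (h : L + 3 ≤ R) :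
    (HF L R).card = (HF (L+1) R).card + (HF L (R-1)).card := by
  classical
  have hset : HF L R =
      ((HF (L+1) R).image (insert (L+1, R))) ∪ ((HF L (R-1)).image (insert (L, R-1))) := by
    ext F
    constructor
    · intro hF
      rcases HF_mem_cases h hF with ⟨hmem, hF'⟩ | ⟨hmem, hF'⟩
      · exact Finset.mem_union_left _ (Finset.mem_image.2 ⟨_, hF', Finset.insert_erase hmem⟩)
      · exact Finset.mem_union_right _ (Finset.mem_image.2 ⟨_, hF', Finset.insert_erase hmem⟩)
    · intro hF
      rcases Finset.mem_union.1 hF with hF | hF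
      · obtain ⟨F', hF', rfl⟩ := Finset.mem_image.1 hF
        exact (insert_left_mem_HF h hF').1
      · obtain ⟨F', hF', rfl⟩ := Finset.mem_image.1 hF
        exact (insert_right_mem_HF h hF').1
  have hdisj : Disjoint ((HF (L+1) R).image (insert (L+1, R)))
      ((HF L (R-1)).image (insert (L, R-1))) := by
    rw [Finset.disjoint_left]
    intro F hFl hFr
    obtain ⟨F₁, hF₁, rfl⟩ := Finset.mem_image.1 hFl
    obtain ⟨F₂, hF₂, heq⟩ := Finset.mem_image.1 hFr
    have hm1 : (L+1, R) ∈ insert (L+1, R) F₁ := Finset.mem_insert_self _ _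
    have hm2 : (L, R-1) ∈ insert (L+1, R) F₁ := by
      rw [← heq]; exact Finset.mem_insert_self _ _
    have hmemHF := (insert_left_mem_HF h hF₁).1
    obtain ⟨⟨_, hnc, _, _⟩, _⟩ := mem_HF_iff.1 hmemHF
    exact hnc (L, R-1) hm2 (L+1, R) hm1 (Or.inl (by dsimp only; omega))
  have hinj1 : Set.InjOn (insert (L+1, R)) ((HF (L+1) R) : Set (Finset (ℕ × ℕ))) := by
    intro F₁ h₁ F₂ h₂ heq
    have n₁ := (insert_left_mem_HF h h₁).2
    have n₂ := (insert_left_mem_HF h h₂).2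
    rw [← Finset.erase_insert n₁, ← Finset.erase_insert n₂, heq]
  have hinj2 : Set.InjOn (insert (L, R-1)) ((HF L (R-1)) : Set (Finset (ℕ × ℕ))) := by
    intro F₁ h₁ F₂ h₂ heq
    have n₁ := (insert_right_mem_HF h h₁).2
    have n₂ := (insert_right_mem_HF h h₂).2
    rw [← Finset.erase_insert n₁, ← Finset.erase_insert n₂, heq]
  rw [hset, Finset.card_union_of_disjoint hdisj,
    Finset.card_image_of_injOn hinj1, Finset.card_image_of_injOn hinj2]

lemma HF_card : ∀ (k L R : ℕ), R = L + 2 + k → (HF L R).card = 2 ^ k := by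
  intro k
  induction k with
  | zero =>
    intro L R hR
    subst hR
    rw [HF_base]
    simp
  | succ k ih =>
    intro L R hR
    subst hR
    rw [HF_step (by omega)]
    have h1 := ih (L+1) (L + 2 + (k+1)) (by omega)
    have h2 := ih L (L + 2 + (k+1) - 1) (by omega)
    rw [h1, h2]
    ring

def P (L R j : ℕ) : Finset (Finset (ℕ × ℕ)) :=
  (EF L R).filter (fun F => (j = L + 1 ∨ (L, j) ∈ F) ∧ (R = j + 1 ∨ (j, R) ∈ F))

lemma HF_subset_EF {L R : ℕ} : HF L R ⊆ EF L R := by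
  intro F hF
  exact mem_EF_iff.2 (mem_HF_iff.1 hF).1

lemma erase_left_mem {L R : ℕ} (h : L + 3 ≤ R) {F : Finset (ℕ × ℕ)}
    (hG : Good L R F) (hmem : (L+1, R) ∈ F) : F.erase (L+1, R) ∈ HF (L+1) R := by
  obtain ⟨hch, hnc, htri, hcard⟩ := hG
  refine mem_HF_iff.2 ⟨⟨?_, ?_, ?_, ?_⟩, ?_⟩
  · intro p hp
    obtain ⟨hpne, hpF⟩ := Finset.mem_erase.1 hp
    have hb := hch p hpF
    unfold IsChord at hb
    have hL1 : L + 1 ≤ p.1 := by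
      by_contra hcon
      have hcr := hnc p hpF (L+1, R) hmem
      unfold Cross at hcr
      dsimp only at hcr
      push_neg at hcr
      omega
    unfold IsChord
    refine ⟨hL1, hb.2.1, hb.2.2.1, ?_⟩
    intro ⟨he1, he2⟩
    exact hpne (Prod.ext he1 he2)
  · intro p hp q hq
    exact hnc p (Finset.mem_erase.1 hp).2 q (Finset.mem_erase.1 hq).2
  · intro p hp q hq ⟨hpq, hr⟩
    exact htri p (Finset.mem_erase.1 hp).2 q (Finset.mem_erase.1 hq).2
      ⟨hpq, (Finset.erase_subset _ _) hr⟩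
  · rw [Finset.card_erase_of_mem hmem]; omega
  · intro p hp q hq ⟨hp1, hq2, hpq⟩
    exact htri p (Finset.mem_erase.1 hp).2 q (Finset.mem_erase.1 hq).2
      ⟨hpq, by rw [hp1, hq2]; exact hmem⟩

lemma erase_right_mem {L R : ℕ} (h : L + 3 ≤ R) {F : Finset (ℕ × ℕ)}
    (hG : Good L R F) (hmem : (L, R-1) ∈ F) : F.erase (L, R-1) ∈ HF L (R-1) := by
  obtain ⟨hch, hnc, htri, hcard⟩ := hG
  refine mem_HF_iff.2 ⟨⟨?_, ?_, ?_, ?_⟩, ?_⟩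
  · intro p hp
    obtain ⟨hpne, hpF⟩ := Finset.mem_erase.1 hp
    have hb := hch p hpF
    unfold IsChord at hb
    have hR1 : p.2 ≤ R - 1 := by
      by_contra hcon
      have hcr := hnc (L, R-1) hmem p hpF
      unfold Cross at hcr
      dsimp only at hcr
      push_neg at hcr
      omega
    unfold IsChord
    refine ⟨hb.1, hb.2.1, hR1, ?_⟩
    intro ⟨he1, he2⟩
    exact hpne (Prod.ext he1 he2)
  · intro p hp q hq
    exact hnc p (Finset.mem_erase.1 hp).2 q (Finset.mem_erase.1 hq).2
  · intro p hp q hq ⟨hpq, hr⟩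
    exact htri p (Finset.mem_erase.1 hp).2 q (Finset.mem_erase.1 hq).2
      ⟨hpq, (Finset.erase_subset _ _) hr⟩
  · rw [Finset.card_erase_of_mem hmem]; omega
  · intro p hp q hq ⟨hp1, hq2, hpq⟩
    exact htri p (Finset.mem_erase.1 hp).2 q (Finset.mem_erase.1 hq).2
      ⟨hpq, by rw [hp1, hq2]; exact hmem⟩

lemma P_left {L R : ℕ} (h : L + 3 ≤ R) :
    P L R (L+1) = (HF (L+1) R).image (insert (L+1, R)) := by
  classical
  ext F
  constructor
  · intro hF
    obtain ⟨hEF, hedge1, hedge2⟩ := Finset.mem_filter.1 hF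
    have hG := mem_EF_iff.1 hEF
    have hmem : (L+1, R) ∈ F := by
      rcases hedge2 with h2 | h2
      · omega
      · exact h2
    exact Finset.mem_image.2 ⟨_, erase_left_mem h hG hmem, Finset.insert_erase hmem⟩
  · intro hF
    obtain ⟨F', hF', rfl⟩ := Finset.mem_image.1 hF
    refine Finset.mem_filter.2 ⟨HF_subset_EF (insert_left_mem_HF h hF').1, Or.inl rfl,
      Or.inr (Finset.mem_insert_self _ _)⟩

lemma P_right {L R : ℕ} (h : L + 3 ≤ R) :
    P L R (R-1) = (HF L (R-1)).image (insert (L, R-1)) := by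
  classical
  ext F
  constructor
  · intro hF
    obtain ⟨hEF, hedge1, hedge2⟩ := Finset.mem_filter.1 hF
    have hG := mem_EF_iff.1 hEF
    have hmem : (L, R-1) ∈ F := by
      rcases hedge1 with h1 | h1
      · omega
      · exact h1
    exact Finset.mem_image.2 ⟨_, erase_right_mem h hG hmem, Finset.insert_erase hmem⟩
  · intro hF
    obtain ⟨F', hF', rfl⟩ := Finset.mem_image.1 hF
    refine Finset.mem_filter.2 ⟨HF_subset_EF (insert_right_mem_HF h hF').1,
      Or.inr (Finset.mem_insert_self _ _), Or.inl (by omega)⟩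

lemma P_left_card {L R : ℕ} (h : L + 3 ≤ R) : (P L R (L+1)).card = (HF (L+1) R).card := by
  classical
  rw [P_left h]
  apply Finset.card_image_of_injOn
  intro F₁ h₁ F₂ h₂ heq
  have n₁ := (insert_left_mem_HF h (Finset.mem_coe.1 h₁)).2
  have n₂ := (insert_left_mem_HF h (Finset.mem_coe.1 h₂)).2
  rw [← Finset.erase_insert n₁, ← Finset.erase_insert n₂, heq]

lemma P_right_card {L R : ℕ} (h : L + 3 ≤ R) : (P L R (R-1)).card = (HF L (R-1)).card := by
  classical
  rw [P_right h]
  apply Finset.card_image_of_injOn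
  intro F₁ h₁ F₂ h₂ heq
  have n₁ := (insert_right_mem_HF h (Finset.mem_coe.1 h₁)).2
  have n₂ := (insert_right_mem_HF h (Finset.mem_coe.1 h₂)).2
  rw [← Finset.erase_insert n₁, ← Finset.erase_insert n₂, heq]

lemma mid_T_mem {L R j : ℕ} (hj1 : L + 2 ≤ j) (hj2 : j + 2 ≤ R)
    {F₁ F₂ : Finset (ℕ × ℕ)} (h₁ : F₁ ∈ HF L j) (h₂ : F₂ ∈ HF j R) :
    insert (L, j) (insert (j, R) (F₁ ∪ F₂)) ∈ P L R j := by
  classical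
  obtain ⟨⟨hch₁, hnc₁, htri₁, hcard₁⟩, hns₁⟩ := mem_HF_iff.1 h₁
  obtain ⟨⟨hch₂, hnc₂, htri₂, hcard₂⟩, hns₂⟩ := mem_HF_iff.1 h₂
  have hb₁ : ∀ p ∈ F₁, L ≤ p.1 ∧ p.1 + 2 ≤ p.2 ∧ p.2 ≤ j := by
    intro p hp; have := hch₁ p hp; exact ⟨this.1, this.2.1, this.2.2.1⟩
  have hb₂ : ∀ p ∈ F₂, j ≤ p.1 ∧ p.1 + 2 ≤ p.2 ∧ p.2 ≤ R := by
    intro p hp; have := hch₂ p hp; exact ⟨this.1, this.2.1, this.2.2.1⟩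
  set T := insert (L, j) (insert (j, R) (F₁ ∪ F₂)) with hT
  have hmemT : ∀ p, p ∈ T ↔ p = (L, j) ∨ p = (j, R) ∨ p ∈ F₁ ∨ p ∈ F₂ := by
    intro p
    simp only [hT, Finset.mem_insert, Finset.mem_union]
  refine Finset.mem_filter.2 ⟨mem_EF_iff.2 ⟨?_, ?_, ?_, ?_⟩,
    Or.inr ((hmemT _).2 (Or.inl rfl)), Or.inr ((hmemT _).2 (Or.inr (Or.inl rfl)))⟩
  · -- chords
    intro p hp
    rcases (hmemT p).1 hp with rfl | rfl | hp | hp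
    · unfold IsChord; dsimp only; omega
    · unfold IsChord; dsimp only; omega
    · have := hb₁ p hp; unfold IsChord; omega
    · have := hb₂ p hp; unfold IsChord; omega
  · -- noncrossing
    intro p hp q hq
    rcases (hmemT p).1 hp with rfl | rfl | hp | hp <;>
      rcases (hmemT q).1 hq with rfl | rfl | hq | hq
    · intro hcr; unfold Cross at hcr; dsimp only at hcr; omega
    · intro hcr; unfold Cross at hcr; dsimp only at hcr; omega
    · intro hcr; unfold Cross at hcr; dsimp only at hcr; have := hb₁ q hq; omega
    · intro hcr; unfold Cross at hcr; dsimp only at hcr; have := hb₂ q hq; omega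
    · intro hcr; unfold Cross at hcr; dsimp only at hcr; omega
    · intro hcr; unfold Cross at hcr; dsimp only at hcr; omega
    · intro hcr; unfold Cross at hcr; dsimp only at hcr; have := hb₁ q hq; omega
    · intro hcr; unfold Cross at hcr; dsimp only at hcr; have := hb₂ q hq; omega
    · intro hcr; unfold Cross at hcr; dsimp only at hcr; have := hb₁ p hp; omega
    · intro hcr; unfold Cross at hcr; dsimp only at hcr; have := hb₁ p hp; omega
    · exact hnc₁ p hp q hq
    · intro hcr; unfold Cross at hcr
      have := hb₁ p hp; have := hb₂ q hq; omega
    · intro hcr; unfold Cross at hcr; dsimp only at hcr; have := hb₂ p hp; omega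
    · intro hcr; unfold Cross at hcr; dsimp only at hcr; have := hb₂ p hp; omega
    · intro hcr; unfold Cross at hcr
      have := hb₂ p hp; have := hb₁ q hq; omega
    · exact hnc₂ p hp q hq
  · -- no triangle
    intro p hp q hq ⟨hpq, hr⟩
    rw [hmemT] at hr
    rcases (hmemT p).1 hp with rfl | rfl | hp | hp <;>
      rcases (hmemT q).1 hq with rfl | rfl | hq | hq
    · dsimp only at hpq; omega
    · -- p = (L,j), q = (j,R), r = (L,R)
      rcases hr with hr | hr | hr | hr
      · rw [Prod.mk.injEq] at hr; dsimp only at hr; omega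
      · rw [Prod.mk.injEq] at hr; dsimp only at hr; omega
      · have := hb₁ _ hr; dsimp only at this; omega
      · have := hb₂ _ hr; dsimp only at this; omega
    · have := hb₁ q hq; dsimp only at hpq; omega
    · -- p = (L,j), q ∈ F₂ with q.1 = j; r = (L, q.2)
      have hbq := hb₂ q hq
      dsimp only at hpq hr
      rcases hr with hr | hr | hr | hr
      · rw [Prod.mk.injEq] at hr; omega
      · rw [Prod.mk.injEq] at hr; omega
      · have := hb₁ _ hr; dsimp only at this; omega
      · have := hb₂ _ hr; dsimp only at this; omega
    · dsimp only at hpq; omega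
    · dsimp only at hpq; omega
    · have := hb₁ q hq; dsimp only at hpq; omega
    · have := hb₂ q hq; dsimp only at hpq; omega
    · have := hb₁ p hp; dsimp only at hpq; omega
    · -- p ∈ F₁ with p.2 = j, q = (j,R); r = (p.1, R)
      have hbp := hb₁ p hp
      dsimp only at hpq hr
      rcases hr with hr | hr | hr | hr
      · rw [Prod.mk.injEq] at hr; omega
      · rw [Prod.mk.injEq] at hr; omega
      · have := hb₁ _ hr; dsimp only at this; omega
      · have := hb₂ _ hr; dsimp only at this; omega
    · -- p, q ∈ F₁
      have hbp := hb₁ p hp; have hbq := hb₁ q hq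
      rcases hr with hr | hr | hr | hr
      · rw [Prod.mk.injEq] at hr
        exact hns₁ p hp q hq ⟨hr.1, hr.2, hpq⟩
      · rw [Prod.mk.injEq] at hr; omega
      · exact htri₁ p hp q hq ⟨hpq, hr⟩
      · have := hb₂ _ hr; dsimp only at this; omega
    · -- p ∈ F₁, q ∈ F₂
      have hbp := hb₁ p hp; have hbq := hb₂ q hq
      rcases hr with hr | hr | hr | hr
      · rw [Prod.mk.injEq] at hr; omega
      · rw [Prod.mk.injEq] at hr; omega
      · have := hb₁ _ hr; dsimp only at this; omega
      · have := hb₂ _ hr; dsimp only at this; omega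
    · have := hb₂ p hp; dsimp only at hpq; omega
    · have := hb₂ p hp; dsimp only at hpq; omega
    · have := hb₂ p hp; have := hb₁ q hq; omega
    · -- p, q ∈ F₂
      have hbp := hb₂ p hp; have hbq := hb₂ q hq
      rcases hr with hr | hr | hr | hr
      · rw [Prod.mk.injEq] at hr; omega
      · rw [Prod.mk.injEq] at hr
        exact hns₂ p hp q hq ⟨hr.1, hr.2, hpq⟩
      · have := hb₁ _ hr; dsimp only at this; omega
      · exact htri₂ p hp q hq ⟨hpq, hr⟩
  · -- cardinality
    have hd : Disjoint F₁ F₂ := by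
      rw [Finset.disjoint_left]
      intro p hp hp'
      have := hb₁ p hp; have := hb₂ p hp'
      omega
    have hn2 : (j, R) ∉ F₁ ∪ F₂ := by
      rw [Finset.mem_union]
      rintro (h | h)
      · have := hb₁ _ h; dsimp only at this; omega
      · have := hch₂ _ h
        exact this.2.2.2 ⟨rfl, rfl⟩
    have hn1 : (L, j) ∉ insert (j, R) (F₁ ∪ F₂) := by
      rw [Finset.mem_insert, Finset.mem_union]
      rintro (h | h | h)
      · rw [Prod.mk.injEq] at h; omega
      · have := hch₁ _ h
        exact this.2.2.2 ⟨rfl, rfl⟩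
      · have := hb₂ _ h; dsimp only at this; omega
    rw [hT, Finset.card_insert_of_notMem hn1, Finset.card_insert_of_notMem hn2,
      Finset.card_union_of_disjoint hd, hcard₁, hcard₂]
    omega

lemma P_mid_decomp {L R j : ℕ} (hj1 : L + 2 ≤ j) (hj2 : j + 2 ≤ R)
    {F : Finset (ℕ × ℕ)} (hF : F ∈ P L R j) :
    ∃ F₁ F₂, F₁ ∈ HF L j ∧ F₂ ∈ HF j R ∧
      F = insert (L, j) (insert (j, R) (F₁ ∪ F₂)) := by
  classical
  obtain ⟨hEF, hedge1, hedge2⟩ := Finset.mem_filter.1 hF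
  obtain ⟨hch, hnc, htri, hcard⟩ := mem_EF_iff.1 hEF
  have he₁ : (L, j) ∈ F := hedge1.resolve_left (by omega)
  have he₂ : (j, R) ∈ F := hedge2.resolve_left (by omega)
  have hb : ∀ p ∈ F, L ≤ p.1 ∧ p.1 + 2 ≤ p.2 ∧ p.2 ≤ R ∧ ¬(p.1 = L ∧ p.2 = R) :=
    fun p hp => hch p hp
  have hdich : ∀ p ∈ F, p.2 ≤ j ∨ j ≤ p.1 := by
    intro p hp
    by_contra hcon
    push_neg at hcon
    obtain ⟨h1, h2⟩ := hcon
    have hbp := hb p hp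
    by_cases hp1 : p.1 = L
    · have := hnc p hp (j, R) he₂
      unfold Cross at this
      dsimp only at this
      push_neg at this
      omega
    · have := hnc (L, j) he₁ p hp
      unfold Cross at this
      dsimp only at this
      push_neg at this
      omega
  set Fpos := F.filter (fun p => p.2 ≤ j) with hFpos
  set Fneg := F.filter (fun p => ¬ p.2 ≤ j) with hFneg
  have hepos : (L, j) ∈ Fpos := Finset.mem_filter.2 ⟨he₁, by dsimp only; omega⟩
  have heneg : (j, R) ∈ Fneg := Finset.mem_filter.2 ⟨he₂, by dsimp only; omega⟩
  set F₁ := Fpos.erase (L, j) with hF₁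
  set F₂ := Fneg.erase (j, R) with hF₂
  have hF₁sub : F₁ ⊆ F := fun p hp => (Finset.mem_filter.1 ((Finset.erase_subset _ _) hp)).1
  have hF₂sub : F₂ ⊆ F := fun p hp => (Finset.mem_filter.1 ((Finset.erase_subset _ _) hp)).1
  have hch₁ : ∀ p ∈ F₁, IsChord L j p := by
    intro p hp
    obtain ⟨hpne, hpm⟩ := Finset.mem_erase.1 hp
    obtain ⟨hpF, hple⟩ := Finset.mem_filter.1 hpm
    have := hb p hpF
    unfold IsChord
    refine ⟨this.1, this.2.1, hple, ?_⟩
    intro ⟨x1, x2⟩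
    exact hpne (Prod.ext x1 x2)
  have hch₂ : ∀ p ∈ F₂, IsChord j R p := by
    intro p hp
    obtain ⟨hpne, hpm⟩ := Finset.mem_erase.1 hp
    obtain ⟨hpF, hple⟩ := Finset.mem_filter.1 hpm
    have h1 := hb p hpF
    have h2 := hdich p hpF
    unfold IsChord
    refine ⟨by omega, h1.2.1, h1.2.2.1, ?_⟩
    intro ⟨x1, x2⟩
    exact hpne (Prod.ext x1 x2)
  have hnc₁ : ∀ p ∈ F₁, ∀ q ∈ F₁, ¬ Cross p q :=
    fun p hp q hq => hnc p (hF₁sub hp) q (hF₁sub hq)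
  have hnc₂ : ∀ p ∈ F₂, ∀ q ∈ F₂, ¬ Cross p q :=
    fun p hp q hq => hnc p (hF₂sub hp) q (hF₂sub hq)
  have hcb₁ : F₁.card ≤ j - L - 2 := maxcard hch₁ hnc₁
  have hcb₂ : F₂.card ≤ R - j - 2 := maxcard hch₂ hnc₂
  have hsubun : F ⊆ Fpos ∪ Fneg := by
    intro p hp
    rw [Finset.mem_union, hFpos, hFneg]
    by_cases h : p.2 ≤ j
    · exact Or.inl (Finset.mem_filter.2 ⟨hp, h⟩)
    · exact Or.inr (Finset.mem_filter.2 ⟨hp, h⟩)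
  have hcu : F.card ≤ Fpos.card + Fneg.card :=
    le_trans (Finset.card_le_card hsubun) (Finset.card_union_le _ _)
  have hposc : F₁.card = Fpos.card - 1 := by rw [hF₁, Finset.card_erase_of_mem hepos]
  have hnegc : F₂.card = Fneg.card - 1 := by rw [hF₂, Finset.card_erase_of_mem heneg]
  have hpos1 : 1 ≤ Fpos.card := Finset.card_pos.2 ⟨_, hepos⟩
  have hneg1 : 1 ≤ Fneg.card := Finset.card_pos.2 ⟨_, heneg⟩
  have hcards : F₁.card = j - L - 2 ∧ F₂.card = R - j - 2 := by omega
  refine ⟨F₁, F₂, ?_, ?_, ?_⟩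
  · refine mem_HF_iff.2 ⟨⟨hch₁, hnc₁, ?_, hcards.1⟩, ?_⟩
    · rintro p hp q hq ⟨hpq, hr⟩
      exact htri p (hF₁sub hp) q (hF₁sub hq) ⟨hpq, hF₁sub hr⟩
    · rintro p hp q hq ⟨h1, h2, h3⟩
      exact htri p (hF₁sub hp) q (hF₁sub hq) ⟨h3, by rw [h1, h2]; exact he₁⟩
  · refine mem_HF_iff.2 ⟨⟨hch₂, hnc₂, ?_, hcards.2⟩, ?_⟩
    · rintro p hp q hq ⟨hpq, hr⟩
      exact htri p (hF₂sub hp) q (hF₂sub hq) ⟨hpq, hF₂sub hr⟩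
    · rintro p hp q hq ⟨h1, h2, h3⟩
      exact htri p (hF₂sub hp) q (hF₂sub hq) ⟨h3, by rw [h1, h2]; exact he₂⟩
  · ext p
    simp only [Finset.mem_insert, Finset.mem_union]
    constructor
    · intro hp
      by_cases hp1 : p = (L, j)
      · exact Or.inl hp1
      by_cases hp2 : p = (j, R)
      · exact Or.inr (Or.inl hp2)
      by_cases h : p.2 ≤ j
      · exact Or.inr (Or.inr (Or.inl (Finset.mem_erase.2 ⟨hp1, Finset.mem_filter.2 ⟨hp, h⟩⟩)))
      · exact Or.inr (Or.inr (Or.inr (Finset.mem_erase.2 ⟨hp2, Finset.mem_filter.2 ⟨hp, h⟩⟩)))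
    · rintro (rfl | rfl | hp | hp)
      · exact he₁
      · exact he₂
      · exact hF₁sub hp
      · exact hF₂sub hp

lemma P_mid_card {L R j : ℕ} (hj1 : L + 2 ≤ j) (hj2 : j + 2 ≤ R) :
    (P L R j).card = 2 ^ (j - L - 2) * 2 ^ (R - j - 2) := by
  classical
  have hset : P L R j =
      ((HF L j) ×ˢ (HF j R)).image (fun q => insert (L, j) (insert (j, R) (q.1 ∪ q.2))) := by
    ext F
    constructor
    · intro hF
      obtain ⟨F₁, F₂, h₁, h₂, rfl⟩ := P_mid_decomp hj1 hj2 hF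
      exact Finset.mem_image.2 ⟨(F₁, F₂), Finset.mem_product.2 ⟨h₁, h₂⟩, rfl⟩
    · intro hF
      obtain ⟨⟨F₁, F₂⟩, hq, rfl⟩ := Finset.mem_image.1 hF
      obtain ⟨h₁, h₂⟩ := Finset.mem_product.1 hq
      exact mid_T_mem hj1 hj2 h₁ h₂
  -- injectivity: recover F₁ and F₂ from the assembled set
  have hrec : ∀ F₁ F₂, F₁ ∈ HF L j → F₂ ∈ HF j R →
      ((insert (L, j) (insert (j, R) (F₁ ∪ F₂))).filter
        (fun p => p.2 ≤ j ∧ ¬(p.1 = L ∧ p.2 = j)) = F₁ ∧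
       (insert (L, j) (insert (j, R) (F₁ ∪ F₂))).filter
        (fun p => j ≤ p.1 ∧ ¬(p.1 = j ∧ p.2 = R)) = F₂) := by
    intro F₁ F₂ h₁ h₂
    obtain ⟨⟨hch₁, _, _, _⟩, _⟩ := mem_HF_iff.1 h₁
    obtain ⟨⟨hch₂, _, _, _⟩, _⟩ := mem_HF_iff.1 h₂
    constructor
    · ext p
      simp only [Finset.mem_filter, Finset.mem_insert, Finset.mem_union]
      constructor
      · rintro ⟨rfl | rfl | hp | hp, h2, h3⟩
        · exact absurd ⟨rfl, rfl⟩ h3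
        · dsimp only at h2; omega
        · exact hp
        · have := hch₂ p hp
          unfold IsChord at this
          omega
      · intro hp
        have := hch₁ p hp
        unfold IsChord at this
        exact ⟨Or.inr (Or.inr (Or.inl hp)), this.2.2.1, this.2.2.2⟩
    · ext p
      simp only [Finset.mem_filter, Finset.mem_insert, Finset.mem_union]
      constructor
      · rintro ⟨rfl | rfl | hp | hp, h2, h3⟩
        · dsimp only at h2; omega
        · exact absurd ⟨rfl, rfl⟩ h3
        · have := hch₁ p hp
          unfold IsChord at this
          omega
        · exact hp
      · intro hp
        have := hch₂ p hp
        unfold IsChord at this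
        exact ⟨Or.inr (Or.inr (Or.inr hp)), this.1, this.2.2.2⟩
  rw [hset, Finset.card_image_of_injOn, Finset.card_product,
    HF_card (j - L - 2) L j (by omega), HF_card (R - j - 2) j R (by omega)]
  intro q1 hq1 q2 hq2 heq
  rw [Finset.mem_coe, Finset.mem_product] at hq1 hq2
  obtain ⟨ha1, hb1⟩ := hq1
  obtain ⟨ha2, hb2⟩ := hq2
  obtain ⟨hr1, hr2⟩ := hrec q1.1 q1.2 ha1 hb1
  obtain ⟨hr1', hr2'⟩ := hrec q2.1 q2.2 ha2 hb2
  dsimp only at heq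
  apply Prod.ext
  · rw [← hr1, ← hr1', heq]
  · rw [← hr2, ← hr2', heq]

lemma EF_card {L R : ℕ} (h : L + 4 ≤ R) :
    (EF L R).card = (R - L + 1) * 2 ^ (R - L - 4) := by
  classical
  have hcover : EF L R = (Finset.Ioo L R).biUnion (P L R) := by
    ext F
    constructor
    · intro hF
      obtain ⟨hch, hnc, htri, hcard⟩ := mem_EF_iff.1 hF
      obtain ⟨j, hj1, hj2, hj3, hj4⟩ := exists_top (by omega) hch hnc hcard
      exact Finset.mem_biUnion.2 ⟨j, Finset.mem_Ioo.2 ⟨hj1, hj2⟩,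
        Finset.mem_filter.2 ⟨hF, hj3, hj4⟩⟩
    · intro hF
      obtain ⟨j, _, hj⟩ := Finset.mem_biUnion.1 hF
      exact (Finset.mem_filter.1 hj).1
  have hdisj : ∀ j ∈ Finset.Ioo L R, ∀ j' ∈ Finset.Ioo L R, j ≠ j' →
      Disjoint (P L R j) (P L R j') := by
    intro j hj j' hj' hne
    rw [Finset.disjoint_left]
    intro F hFj hFj'
    obtain ⟨hEF, e1, e2⟩ := Finset.mem_filter.1 hFj
    obtain ⟨_, e1', e2'⟩ := Finset.mem_filter.1 hFj'
    obtain ⟨hch, hnc, _, _⟩ := mem_EF_iff.1 hEF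
    have hjIoo := Finset.mem_Ioo.1 hj
    have hjIoo' := Finset.mem_Ioo.1 hj'
    exact hne (top_unique hch hnc ⟨hjIoo.1, hjIoo.2, e1, e2⟩ ⟨hjIoo'.1, hjIoo'.2, e1', e2'⟩)
  rw [hcover, Finset.card_biUnion hdisj]
  have hIoo : Finset.Ioo L R = insert (L+1) (insert (R-1) (Finset.Ioo (L+1) (R-1))) := by
    ext x
    simp only [Finset.mem_Ioo, Finset.mem_insert]
    omega
  have hn1 : (L+1) ∉ insert (R-1) (Finset.Ioo (L+1) (R-1)) := by
    simp only [Finset.mem_insert, Finset.mem_Ioo]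
    omega
  have hn2 : (R-1) ∉ Finset.Ioo (L+1) (R-1) := by
    simp only [Finset.mem_Ioo]
    omega
  rw [hIoo, Finset.sum_insert hn1, Finset.sum_insert hn2]
  have hPl : (P L R (L+1)).card = 2 ^ (R - L - 3) := by
    rw [P_left_card (by omega), HF_card (R - L - 3) (L+1) R (by omega)]
  have hPr : (P L R (R-1)).card = 2 ^ (R - L - 3) := by
    rw [P_right_card (by omega), HF_card (R - L - 3) L (R-1) (by omega)]
  have hmid : ∑ j ∈ Finset.Ioo (L+1) (R-1), (P L R j).card
      = (R - L - 3) * 2 ^ (R - L - 4) := by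
    rw [Finset.sum_congr rfl (g := fun _ => 2 ^ (R - L - 4)) ?_]
    · rw [Finset.sum_const, Nat.card_Ioo]
      have : R - 1 - (L + 1) - 1 = R - L - 3 := by omega
      rw [this, smul_eq_mul]
    · intro j hj
      have hjIoo := Finset.mem_Ioo.1 hj
      rw [P_mid_card (by omega) (by omega), ← pow_add]
      congr 1
      omega
  rw [hPl, hPr, hmid]
  have e1 : R - L - 3 = (R - L - 4) + 1 := by omega
  have e2 : R - L + 1 = (R - L - 4) + 5 := by omega
  rw [e1, e2, pow_succ]
  ring

end ET

/-- The pair `(a,b)` (with `a < b` in `Fin n`) is a side of the convex `n`-gon whose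
vertices are `0, …, n-1` in cyclic order. -/
def IsSide (n : ℕ) (a b : Fin n) : Prop :=
  b.val = a.val + 1 ∨ (a.val = 0 ∧ b.val = n - 1)

/-- A diagonal of the convex `n`-gon, normalized as a pair `(a,b)` with `a < b`. -/
def IsDiagonal (n : ℕ) (p : Fin n × Fin n) : Prop :=
  p.1 < p.2 ∧ ¬ IsSide n p.1 p.2

/-- Two normalized chords of the convex `n`-gon cross in their interiors. -/
def Crosses (n : ℕ) (p q : Fin n × Fin n) : Prop :=
  (p.1 < q.1 ∧ q.1 < p.2 ∧ p.2 < q.2) ∨ (q.1 < p.1 ∧ p.1 < q.2 ∧ q.2 < p.2)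

/-- A triangulation of the convex `n`-gon: a maximal (`n-3`-element) set of pairwise
non-crossing diagonals. -/
def IsTriangulation (n : ℕ) (D : Finset (Fin n × Fin n)) : Prop :=
  (∀ p ∈ D, IsDiagonal n p) ∧ (∀ p ∈ D, ∀ q ∈ D, ¬ Crosses n p q) ∧ D.card = n - 3

/-- `a` and `b` (with `a < b`) are joined by an edge: a polygon side or a diagonal of `D`. -/
def IsEdge (n : ℕ) (D : Finset (Fin n × Fin n)) (a b : Fin n) : Prop :=
  IsSide n a b ∨ (a, b) ∈ D

/-- A triangle of the triangulation `D` (all three pairs of vertices are edges;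
for a triangulated convex polygon these are exactly the triangular faces). -/
def IsTriangleOf (n : ℕ) (D : Finset (Fin n × Fin n)) (a b c : Fin n) : Prop :=
  a < b ∧ b < c ∧ IsEdge n D a b ∧ IsEdge n D b c ∧ IsEdge n D a c

/-- A triangulation is extroverted if every triangle shares an edge with the boundary. -/
def IsExtroverted (n : ℕ) (D : Finset (Fin n × Fin n)) : Prop :=
  ∀ a b c : Fin n, IsTriangleOf n D a b c →
    IsSide n a b ∨ IsSide n b c ∨ IsSide n a c

namespace ET

def emb (n : ℕ) : Fin n × Fin n ↪ ℕ × ℕ where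
  toFun := fun p => (p.1.1, p.2.1)
  inj' := by
    rintro ⟨a, b⟩ ⟨c, d⟩ h
    rw [Prod.mk.injEq] at h
    rw [Prod.mk.injEq]
    exact ⟨Fin.ext h.1, Fin.ext h.2⟩

lemma diag_iff_chord {n : ℕ} (hn : 5 ≤ n) (p : Fin n × Fin n) :
    IsDiagonal n p ↔ IsChord 0 (n-1) (p.1.1, p.2.1) := by
  have h1 := p.1.isLt
  have h2 := p.2.isLt
  simp only [IsDiagonal, IsSide, IsChord, Fin.lt_def]
  omega

lemma crosses_iff_cross {n : ℕ} (p q : Fin n × Fin n) :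
    Crosses n p q ↔ Cross ((emb n) p) ((emb n) q) := by
  simp only [Crosses, Cross, emb, Function.Embedding.coeFn_mk, Fin.lt_def]
  exact Iff.rfl

lemma mem_map_emb {n : ℕ} {D : Finset (Fin n × Fin n)} (a b : Fin n) :
    (a.1, b.1) ∈ D.map (emb n) ↔ (a, b) ∈ D := by
  rw [Finset.mem_map]
  constructor
  · rintro ⟨p, hp, he⟩
    simp only [emb, Function.Embedding.coeFn_mk, Prod.mk.injEq] at he
    have : p = (a, b) := by
      rw [Prod.ext_iff]
      exact ⟨Fin.ext (congrArg Prod.fst he), Fin.ext (congrArg Prod.snd he)⟩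
    rwa [← this]
  · intro h
    exact ⟨(a, b), h, rfl⟩

lemma main_iff {n : ℕ} (hn : 5 ≤ n) (D : Finset (Fin n × Fin n)) :
    (IsTriangulation n D ∧ IsExtroverted n D) ↔ D.map (emb n) ∈ EF 0 (n-1) := by
  rw [mem_EF_iff]
  constructor
  · rintro ⟨⟨hd, hnc, hcard⟩, hext⟩
    refine ⟨?_, ?_, ?_, ?_⟩
    · intro q hq
      obtain ⟨p, hp, rfl⟩ := Finset.mem_map.1 hq
      exact (diag_iff_chord hn p).1 (hd p hp)
    · intro q hq r hr
      obtain ⟨p, hp, rfl⟩ := Finset.mem_map.1 hq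
      obtain ⟨p', hp', rfl⟩ := Finset.mem_map.1 hr
      intro hcr
      exact hnc p hp p' hp' ((crosses_iff_cross p p').2 hcr)
    · rintro q hq r hr ⟨hqr, hmem⟩
      obtain ⟨p, hp, rfl⟩ := Finset.mem_map.1 hq
      obtain ⟨p', hp', rfl⟩ := Finset.mem_map.1 hr
      simp only [emb, Function.Embedding.coeFn_mk] at hqr hmem
      have hb : p.2 = p'.1 := Fin.ext hqr
      have hac : (p.1, p'.2) ∈ D := (mem_map_emb p.1 p'.2).1 hmem
      have htriangle : IsTriangleOf n D p.1 p.2 p'.2 := by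
        refine ⟨(hd p hp).1, ?_, Or.inr (by rw [Prod.mk.eta]; exact hp),
          Or.inr (by rw [hb, Prod.mk.eta]; exact hp'), Or.inr hac⟩
        rw [hb]
        exact (hd p' hp').1
      rcases hext p.1 p.2 p'.2 htriangle with hs | hs | hs
      · exact (hd p hp).2 hs
      · have := (hd p' hp').2
        rw [← hb] at this
        exact this hs
      · exact (hd (p.1, p'.2) hac).2 hs
    · rw [Finset.card_map, hcard]
      omega
  · rintro ⟨hch, hnc, htri, hcard⟩
    have hd : ∀ p ∈ D, IsDiagonal n p := by
      intro p hp
      exact (diag_iff_chord hn p).2 (hch _ (Finset.mem_map_of_mem _ hp))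
    refine ⟨⟨hd, ?_, ?_⟩, ?_⟩
    · intro p hp q hq hcr
      exact hnc _ (Finset.mem_map_of_mem _ hp) _ (Finset.mem_map_of_mem _ hq)
        ((crosses_iff_cross p q).1 hcr)
    · rw [← Finset.card_map (emb n), hcard]
      omega
    · intro a b c htriangle
      obtain ⟨hab, hbc, he1, he2, he3⟩ := htriangle
      by_contra hcon
      push_neg at hcon
      obtain ⟨hs1, hs2, hs3⟩ := hcon
      have hm1 : (a, b) ∈ D := he1.resolve_left hs1
      have hm2 : (b, c) ∈ D := he2.resolve_left hs2
      have hm3 : (a, c) ∈ D := he3.resolve_left hs3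
      refine htri ((a.1, b.1)) ((mem_map_emb a b).2 hm1) ((b.1, c.1)) ((mem_map_emb b c).2 hm2)
        ⟨rfl, ?_⟩
      exact (mem_map_emb a c).2 hm3

end ET

/-- The number of extroverted triangulations of a convex `n`-gon (for `n ≥ 5`)
is `n·2^(n-5)`. -/
theorem count_extroverted_triangulations (n : ℕ) (hn : 5 ≤ n) :
    Nat.card {D : Finset (Fin n × Fin n) // IsTriangulation n D ∧ IsExtroverted n D}
      = n * 2 ^ (n - 5) := by
  classical
  have hn0 : 0 < n := by omega
  set g : ℕ × ℕ → Fin n × Fin n :=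
    fun q => (⟨q.1 % n, Nat.mod_lt _ hn0⟩, ⟨q.2 % n, Nat.mod_lt _ hn0⟩) with hg
  let f : {D : Finset (Fin n × Fin n) // IsTriangulation n D ∧ IsExtroverted n D} →
      {F : Finset (ℕ × ℕ) // F ∈ ET.EF 0 (n-1)} :=
    fun D => ⟨D.1.map (ET.emb n), (ET.main_iff hn D.1).1 D.2⟩
  have hbij : Function.Bijective f := by
    constructor
    · intro D₁ D₂ heq
      apply Subtype.ext
      have := congrArg Subtype.val heq
      exact Finset.map_injective (ET.emb n) this
    · rintro ⟨F, hF⟩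
      have hbnd : ∀ q ∈ F, q.1 < n ∧ q.2 < n := by
        intro q hq
        have := (ET.mem_EF_iff.1 hF).1 q hq
        unfold ET.IsChord at this
        omega
      set D : Finset (Fin n × Fin n) := F.image g with hD
      have hmap : D.map (ET.emb n) = F := by
        ext q
        rw [Finset.mem_map]
        constructor
        · rintro ⟨r, hr, rfl⟩
          rw [hD, Finset.mem_image] at hr
          obtain ⟨s, hs, rfl⟩ := hr
          have hb := hbnd s hs
          have : (ET.emb n) (g s) = s := by
            simp only [hg, ET.emb, Function.Embedding.coeFn_mk]
            rw [Prod.ext_iff]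
            exact ⟨Nat.mod_eq_of_lt hb.1, Nat.mod_eq_of_lt hb.2⟩
          rwa [this]
        · intro hq
          refine ⟨g q, by rw [hD]; exact Finset.mem_image_of_mem _ hq, ?_⟩
          have hb := hbnd q hq
          simp only [hg, ET.emb, Function.Embedding.coeFn_mk]
          rw [Prod.ext_iff]
          exact ⟨Nat.mod_eq_of_lt hb.1, Nat.mod_eq_of_lt hb.2⟩
      refine ⟨⟨D, (ET.main_iff hn D).2 (by rw [hmap]; exact hF)⟩, ?_⟩
      apply Subtype.ext
      exact hmap
  rw [Nat.card_eq_of_bijective f hbij, Nat.card_eq_finsetCard (ET.EF 0 (n-1)),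
    ET.EF_card (by omega : 0 + 4 ≤ n - 1)]
  have e1 : n - 1 - 0 + 1 = n := by omega
  have e2 : n - 1 - 0 - 4 = n - 5 := by omega
  rw [e1, e2]
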